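/- Alternating sum formula: let V be a persistence module over ℝ, let a < b ≤ c < d be real numbers, and write r_s^t = rank(v_s^t). If r_b^c < ∞, then r_a^c, r_b^d, r_a^d are also finite and μ_V([a,b]×[c,d]) = r_b^c − r_a^c − r_b^d + r_a^d. -/

import Mathlib

attribute [local instance] Classical.propDecidable

structure PersMod (k : Type) [Field k] (T : Type) [Preorder T] where
  space : T → Type
  [addCommGroup : ∀ t, AddCommGroup (space t)]
  [module : ∀ t, Module k (space t)]
  map : ∀ s t : T, s ≤ t → space s →ₗ[k] space t
  map_id : ∀ t, map t t le_rfl = LinearMap.id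
  map_comp : ∀ r s t (h1 : r ≤ s) (h2 : s ≤ t),
    (map s t h2).comp (map r s h1) = map r t (h1.trans h2)

attribute [instance] PersMod.addCommGroup PersMod.module

def PersIso {k : Type} [Field k] {T : Type} [Preorder T] (U V : PersMod k T) : Prop :=
  ∃ e : ∀ t, U.space t ≃ₗ[k] V.space t,
    ∀ s t (h : s ≤ t),
      (e t).toLinearMap.comp (U.map s t h) = (V.map s t h).comp (e s).toLinearMap

def IsIntervalSet {T : Type} [Preorder T] (J : Set T) : Prop :=
  J.Nonempty ∧ ∀ ⦃r s t : T⦄, r ∈ J → t ∈ J → r ≤ s → s ≤ t → s ∈ J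

noncomputable def intervalModule (k : Type) [Field k] (T : Type) [Preorder T]
    (J : Set T) (hJ : IsIntervalSet J) : PersMod k T where
  space t := PLift (t ∈ J) → k
  addCommGroup := fun _ => inferInstance
  module := fun _ => inferInstance
  map s t _ :=
    { toFun := fun f _ => if hs : s ∈ J then f ⟨hs⟩ else 0
      map_add' := fun f g => by
        funext ht; by_cases hs : s ∈ J <;> simp [hs]
      map_smul' := fun c f => by
        funext ht; by_cases hs : s ∈ J <;> simp [hs] }
  map_id t := by
    refine LinearMap.ext fun f => funext fun ht => ?_
    show (if hs : t ∈ J then f ⟨hs⟩ else 0) = f ht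
    rw [dif_pos ht.down]
  map_comp r s t h1 h2 := by
    refine LinearMap.ext fun f => funext fun ht => ?_
    show (if hs : s ∈ J then (if hr : r ∈ J then f ⟨hr⟩ else 0) else 0)
        = (if hr : r ∈ J then f ⟨hr⟩ else 0)
    by_cases hr : r ∈ J
    · have hs : s ∈ J := hJ.2 hr ht.down h1 h2
      simp [hr, hs]
    · by_cases hs : s ∈ J <;> simp [hr, hs]

noncomputable def dsum {k : Type} [Field k] {T : Type} [Preorder T] {L : Type}
    (V : L → PersMod k T) : PersMod k T where
  space t := DFinsupp (fun ℓ => (V ℓ).space t)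
  addCommGroup := fun _ => inferInstance
  module := fun _ => inferInstance
  map s t h := DFinsupp.mapRange.linearMap (fun ℓ => (V ℓ).map s t h)
  map_id t := by
    show DFinsupp.mapRange.linearMap (fun ℓ => (V ℓ).map t t le_rfl) = LinearMap.id
    have : (fun ℓ => (V ℓ).map t t le_rfl)
        = fun ℓ => (LinearMap.id : (V ℓ).space t →ₗ[k] (V ℓ).space t) :=
      funext fun ℓ => (V ℓ).map_id t
    rw [this]
    exact DFinsupp.mapRange.linearMap_id
  map_comp r s t h1 h2 := by
    show (DFinsupp.mapRange.linearMap (fun ℓ => (V ℓ).map s t h2)).comp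
        (DFinsupp.mapRange.linearMap (fun ℓ => (V ℓ).map r s h1))
      = DFinsupp.mapRange.linearMap (fun ℓ => (V ℓ).map r t (h1.trans h2))
    rw [← DFinsupp.mapRange.linearMap_comp]
    congr 1
    funext ℓ
    exact (V ℓ).map_comp r s t h1 h2

open scoped ENNReal

section Dim

noncomputable def edim (k : Type) [Field k] (M : Type) [AddCommGroup M] [Module k M] : ℕ∞ :=
  Cardinal.toENat (Module.rank k M)

noncomputable def erank {k : Type} [Field k] {M N : Type} [AddCommGroup M] [Module k M]
    [AddCommGroup N] [Module k N] (f : M →ₗ[k] N) : ℕ∞ :=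
  edim k (LinearMap.range f)

noncomputable def ecard (S : Type) : ℕ∞ := Cardinal.toENat (Cardinal.mk S)

end Dim

section Matchings

noncomputable def eDiff (x y : EReal) : ℝ≥0∞ :=
  if x = y then 0
  else if x = ⊤ ∨ x = ⊥ ∨ y = ⊤ ∨ y = ⊥ then ⊤
  else ENNReal.ofReal |x.toReal - y.toReal|

noncomputable def dPt (α β : EReal × EReal) : ℝ≥0∞ :=
  max (eDiff α.1 β.1) (eDiff α.2 β.2)

noncomputable def diagDist (α : EReal × EReal) : ℝ≥0∞ :=
  if α.1 = ⊥ ∨ α.2 = ⊤ then ⊤ else ENNReal.ofReal ((α.2.toReal - α.1.toReal) / 2)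

def IsMatching {α β : Type} (M : Set (α × β)) : Prop :=
  (∀ a b b', (a, b) ∈ M → (a, b') ∈ M → b = b') ∧
  (∀ a a' b, (a, b) ∈ M → (a', b) ∈ M → a = a')

def IsDeltaMatching {α β : Type} (A : α → EReal × EReal) (B : β → EReal × EReal)
    (δ : ℝ≥0∞) : Prop :=
  ∃ M : Set (α × β), IsMatching M ∧
    (∀ p ∈ M, dPt (A p.1) (B p.2) ≤ δ) ∧
    (∀ a, (∀ b, (a, b) ∉ M) → diagDist (A a) ≤ δ) ∧
    (∀ b, (∀ a, (a, b) ∉ M) → diagDist (B b) ≤ δ)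

noncomputable def dBottle {α β : Type} (A : α → EReal × EReal) (B : β → EReal × EReal) : ℝ≥0∞ :=
  sInf {d : ℝ≥0∞ | ∃ δ : ℝ, 0 ≤ δ ∧ IsDeltaMatching A B (ENNReal.ofReal δ) ∧ d = ENNReal.ofReal δ}

end Matchings

section Measure

noncomputable def persIm {k : Type} [Field k] (V : PersMod k ℝ) (a : EReal) (c : ℝ) :
    Submodule k (V.space c) :=
  if h : ∃ a' : ℝ, a = (a' : EReal) ∧ a' ≤ c then
    LinearMap.range (V.map h.choose c h.choose_spec.2)
  else ⊥

noncomputable def persKer {k : Type} [Field k] (V : PersMod k ℝ) (c : ℝ) (d : EReal) :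
    Submodule k (V.space c) :=
  if h : ∃ d' : ℝ, d = (d' : EReal) ∧ c ≤ d' then
    LinearMap.ker (V.map c h.choose h.choose_spec.2)
  else ⊤

noncomputable def persMeasure {k : Type} [Field k] (V : PersMod k ℝ)
    (a : EReal) (b c : ℝ) (d : EReal) : ℕ∞ :=
  edim k
    (↥(persIm V (b : EReal) c ⊓ persKer V c d) ⧸
      Submodule.comap (persIm V (b : EReal) c ⊓ persKer V c d).subtype
        (persIm V a c ⊓ persKer V c d))

end Measure

section Interleaving

def Interleaved (k : Type) [Field k] (U V : PersMod k ℝ) (δ : ℝ) : Prop :=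
  ∃ (φ : ∀ t : ℝ, U.space t →ₗ[k] V.space (t + δ))
    (ψ : ∀ t : ℝ, V.space t →ₗ[k] U.space (t + δ)),
    (∀ s t (h : s ≤ t),
      (φ t).comp (U.map s t h) = (V.map (s + δ) (t + δ) (by linarith)).comp (φ s)) ∧
    (∀ s t (h : s ≤ t),
      (ψ t).comp (V.map s t h) = (U.map (s + δ) (t + δ) (by linarith)).comp (ψ s)) ∧
    (∀ t (h : t ≤ t + δ + δ), (ψ (t + δ)).comp (φ t) = U.map t (t + δ + δ) h) ∧
    (∀ t (h : t ≤ t + δ + δ), (φ (t + δ)).comp (ψ t) = V.map t (t + δ + δ) h)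

noncomputable def dInter (k : Type) [Field k] (U V : PersMod k ℝ) : ℝ≥0∞ :=
  sInf {d : ℝ≥0∞ | ∃ δ : ℝ, 0 ≤ δ ∧ Interleaved k U V δ ∧ d = ENNReal.ofReal δ}

def QTame (k : Type) [Field k] (V : PersMod k ℝ) : Prop :=
  ∀ s t : ℝ, ∀ h : s < t, erank (V.map s t h.le) ≠ ⊤

def LocFinitePM (k : Type) [Field k] (W : PersMod k ℝ) : Prop :=
  ∃ (L : Type) (J : L → Set ℝ) (hJ : ∀ ℓ, IsIntervalSet (J ℓ)),
    PersIso W (dsum fun ℓ => intervalModule k ℝ (J ℓ) (hJ ℓ)) ∧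
    ∀ S : Set ℝ, Bornology.IsBounded S → {ℓ : L | (J ℓ ∩ S).Nonempty}.Finite

noncomputable def zeroPers (k : Type) [Field k] : PersMod k ℝ where
  space _ := PUnit
  addCommGroup := fun _ => inferInstance
  module := fun _ => inferInstance
  map _ _ _ := 0
  map_id t := LinearMap.ext fun x => Subsingleton.elim _ _
  map_comp r s t h1 h2 := LinearMap.ext fun x => Subsingleton.elim _ _

noncomputable def smoothing {k : Type} [Field k] (V : PersMod k ℝ) (ε : ℝ) (hε : 0 < ε) :
    PersMod k ℝ where
  space t := LinearMap.range (V.map (t - ε) (t + ε) (by linarith))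
  addCommGroup := fun _ => inferInstance
  module := fun _ => inferInstance
  map s t h := LinearMap.restrict (V.map (s + ε) (t + ε) (by linarith))
    (p := LinearMap.range (V.map (s - ε) (s + ε) (by linarith)))
    (q := LinearMap.range (V.map (t - ε) (t + ε) (by linarith)))
    (by
      rintro x ⟨y, rfl⟩
      refine ⟨V.map (s - ε) (t - ε) (by linarith) y, ?_⟩
      have h1 := LinearMap.congr_fun
        (V.map_comp (s - ε) (t - ε) (t + ε) (by linarith) (by linarith)) y
      have h2 := LinearMap.congr_fun
        (V.map_comp (s - ε) (s + ε) (t + ε) (by linarith) (by linarith)) y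
      simp only [LinearMap.comp_apply] at h1 h2
      rw [h1, h2])
  map_id t := by
    refine LinearMap.ext fun x => Subtype.ext ?_
    have := LinearMap.congr_fun (V.map_id (t + ε)) x.1
    simpa [LinearMap.restrict_apply] using this
  map_comp r s t h1 h2 := by
    refine LinearMap.ext fun x => Subtype.ext ?_
    have := LinearMap.congr_fun
      (V.map_comp (r + ε) (s + ε) (t + ε) (by linarith) (by linarith)) x.1
    simpa [LinearMap.restrict_apply] using this

end Interleaving

section Webb

def webbSubmodule (k : Type) [Field k] (t : ℤ) : Submodule k (ℕ → k) where
  carrier := {x | ∀ i : ℕ, (i : ℤ) < -t → x i = 0}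
  add_mem' := by
    intro x y hx hy i hi
    simp [Pi.add_apply, hx i hi, hy i hi]
  zero_mem' := by
    intro i hi
    rfl
  smul_mem' := by
    intro c x hx i hi
    simp [Pi.smul_apply, hx i hi]

noncomputable def webbModule (k : Type) [Field k] : PersMod k ↥{n : ℤ | n ≤ 0} where
  space t := ↥(webbSubmodule k t.1)
  addCommGroup := fun _ => inferInstance
  module := fun _ => inferInstance
  map s t h := Submodule.inclusion (by
    intro x hx
    have hx' : ∀ i : ℕ, (i : ℤ) < -s.1 → x i = 0 := hx
    intro i hi
    exact hx' i (lt_of_lt_of_le hi (neg_le_neg h)))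
  map_id t := LinearMap.ext fun x => rfl
  map_comp r s t h1 h2 := LinearMap.ext fun x => rfl

end Webb

section Decorated

/-- `decMem t x` : the real number `t` belongs to the interval described by the
decorated pair `x = ((p, εp), (q, εq))`, where the decoration `false` means `⁻`
and `true` means `⁺`. -/
def decMem (t : ℝ) (x : (EReal × Bool) × (EReal × Bool)) : Prop :=
  (x.1.1 < (t : EReal) ∨ (x.1.1 = (t : EReal) ∧ x.1.2 = false)) ∧
  ((t : EReal) < x.2.1 ∨ ((t : EReal) = x.2.1 ∧ x.2.2 = true))

/-- A valid decorated pair: the left coordinate is `p⁻`/`p⁺` for a real `p` or `−∞⁺`,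
the right coordinate is `q⁻`/`q⁺` for a real `q` or `+∞⁻`, and the corresponding
interval is nonempty (i.e. `p* < q*`). -/
def ValidDec (x : (EReal × Bool) × (EReal × Bool)) : Prop :=
  (x.1.1 = ⊥ → x.1.2 = true) ∧ x.1.1 ≠ ⊤ ∧ (x.2.1 = ⊤ → x.2.2 = false) ∧ x.2.1 ≠ ⊥ ∧
  {t : ℝ | decMem t x}.Nonempty

/-- The decorated pair `x` belongs to the rectangle `[a,b] × [c,d]`, i.e.
`[b,c] ⊆ ⟨p*,q*⟩ ⊆ (a,d)`. -/
def decInRect (x : (EReal × Bool) × (EReal × Bool)) (a : EReal) (b c : ℝ) (d : EReal) : Prop :=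
  (∀ t ∈ Set.Icc b c, decMem t x) ∧
  (∀ t : ℝ, decMem t x → a < (t : EReal) ∧ (t : EReal) < d)

/-- `Dgm` is (a labelling of) the decorated persistence diagram of `V`. -/
def IsDgmOf {k : Type} [Field k] (V : PersMod k ℝ) {ι : Type}
    (Dgm : ι → (EReal × Bool) × (EReal × Bool)) : Prop :=
  (∀ i, ValidDec (Dgm i)) ∧
  ∀ (a : EReal) (b c : ℝ) (d : EReal), a < (b : EReal) → b ≤ c → (c : EReal) < d →
    persMeasure V a b c d = ecard {i : ι // decInRect (Dgm i) a b c d}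

end Decorated

section RMeasure

/-- `[a,b] × [c,d]` is a (nondegenerate) rectangle contained in `D`. -/
def RectIn (D : Set (ℝ × ℝ)) (a b c d : ℝ) : Prop :=
  a < b ∧ c < d ∧ Set.Icc a b ×ˢ Set.Icc c d ⊆ D

/-- An r-measure on `D`: additivity under horizontal and vertical splitting. -/
def IsRMeasure (D : Set (ℝ × ℝ)) (μ : ℝ → ℝ → ℝ → ℝ → ℕ∞) : Prop :=
  (∀ a p b c d, a < p → p < b → RectIn D a b c d → μ a b c d = μ a p c d + μ p b c d) ∧
  (∀ a b c q d, c < q → q < d → RectIn D a b c d → μ a b c d = μ a b c q + μ a b q d)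

/-- Membership of a decorated point of the plane (`Bool` decoration: `true` = `⁺`,
`false` = `⁻`) in the closed rectangle `[a,b] × [c,d]`. -/
def dptMem (x : (ℝ × Bool) × (ℝ × Bool)) (a b c d : ℝ) : Prop :=
  a ≤ x.1.1 ∧ x.1.1 ≤ b ∧ c ≤ x.2.1 ∧ x.2.1 ≤ d ∧
  (x.1.1 = a → x.1.2 = true) ∧ (x.1.1 = b → x.1.2 = false) ∧
  (x.2.1 = c → x.2.2 = true) ∧ (x.2.1 = d → x.2.2 = false)

/-- The r-interior `D•` of `D`: decorated points contained in some rectangle of `D`. -/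
def rInt (D : Set (ℝ × ℝ)) : Set ((ℝ × Bool) × (ℝ × Bool)) :=
  {x | ∃ a b c d, RectIn D a b c d ∧ dptMem x a b c d}

/-- The number of decorated points, counted with multiplicity `m`, lying in the
rectangle `[a,b] × [c,d]`. -/
noncomputable def dcount (m : (ℝ × Bool) × (ℝ × Bool) → ℕ) (a b c d : ℝ) : ℕ∞ :=
  ecard (Σ x : {x : (ℝ × Bool) × (ℝ × Bool) // dptMem x a b c d}, Fin (m x.1))

end RMeasure

section Aux

variable {k : Type} [Field k]

lemma range_map_congr (V : PersMod k ℝ) {x y c : ℝ} (hxy : x = y) (hx : x ≤ c) (hy : y ≤ c) :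
    LinearMap.range (V.map x c hx) = LinearMap.range (V.map y c hy) := by subst hxy; rfl

lemma ker_map_congr (V : PersMod k ℝ) {c x y : ℝ} (hxy : x = y) (hx : c ≤ x) (hy : c ≤ y) :
    LinearMap.ker (V.map c x hx) = LinearMap.ker (V.map c y hy) := by subst hxy; rfl

lemma persIm_coe (V : PersMod k ℝ) (b c : ℝ) (h : b ≤ c) :
    persIm V (b : EReal) c = LinearMap.range (V.map b c h) := by
  have hex : ∃ a' : ℝ, (b : EReal) = (a' : EReal) ∧ a' ≤ c := ⟨b, rfl, h⟩
  rw [persIm, dif_pos hex]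
  exact range_map_congr V (by exact_mod_cast hex.choose_spec.1.symm) _ _

lemma persKer_coe (V : PersMod k ℝ) (c d : ℝ) (h : c ≤ d) :
    persKer V c (d : EReal) = LinearMap.ker (V.map c d h) := by
  have hex : ∃ d' : ℝ, (d : EReal) = (d' : EReal) ∧ c ≤ d' := ⟨d, rfl, h⟩
  rw [persKer, dif_pos hex]
  exact ker_map_congr V (by exact_mod_cast hex.choose_spec.1.symm) _ _

end Aux

theorem stmt5 {k : Type} [Field k] (V : PersMod k ℝ) (a b c d : ℝ)
    (hab : a < b) (hbc : b ≤ c) (hcd : c < d)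
    (hfin : erank (V.map b c hbc) ≠ ⊤) :
    erank (V.map a c (hab.le.trans hbc)) ≠ ⊤ ∧
    erank (V.map b d (hbc.trans hcd.le)) ≠ ⊤ ∧
    erank (V.map a d ((hab.le.trans hbc).trans hcd.le)) ≠ ⊤ ∧
    persMeasure V (a : EReal) b c (d : EReal)
        + erank (V.map a c (hab.le.trans hbc)) + erank (V.map b d (hbc.trans hcd.le))
      = erank (V.map b c hbc) + erank (V.map a d ((hab.le.trans hbc).trans hcd.le)) := by
  have hac : a ≤ c := hab.le.trans hbc
  have had : a ≤ d := hac.trans hcd.le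
  have hbd : b ≤ d := hbc.trans hcd.le
  set Ib := LinearMap.range (V.map b c hbc) with hIb
  set Ia := LinearMap.range (V.map a c hac) with hIa
  set K := LinearMap.ker (V.map c d hcd.le) with hK
  -- Ia ≤ Ib
  have hIaIb : Ia ≤ Ib := by
    rw [hIa, hIb, ← V.map_comp a b c hab.le hbc]
    exact LinearMap.range_comp_le_range _ _
  -- key rank-nullity identities, for s = a and s = b
  have key : ∀ (s : ℝ) (hsc : s ≤ c) (hsd : s ≤ d),
      Module.rank k (LinearMap.range (V.map s d hsd))
        + Module.rank k ↥(LinearMap.range (V.map s c hsc) ⊓ K)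
        = Module.rank k ↥(LinearMap.range (V.map s c hsc)) := by
    intro s hsc hsd
    set I := LinearMap.range (V.map s c hsc)
    set f := (V.map c d hcd.le).comp I.subtype with hf
    have hrange : LinearMap.range f = LinearMap.range (V.map s d hsd) := by
      rw [hf, LinearMap.range_comp, Submodule.range_subtype,
        ← V.map_comp s c d hsc hcd.le, LinearMap.range_comp]
    have hker : LinearMap.ker f = Submodule.comap I.subtype (I ⊓ K) := by
      rw [hf, LinearMap.ker_comp, ← hK, Submodule.comap_inf, Submodule.comap_subtype_self,
        top_inf_eq]
    have hkerG : Module.rank k (LinearMap.ker f) = Module.rank k ↥(I ⊓ K) := by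
      rw [hker]
      exact (Submodule.comapSubtypeEquivOfLe inf_le_left).rank_eq
    have := f.rank_range_add_rank_ker
    rwa [hrange, hkerG] at this
  have keyb := key b hbc hbd
  have keya := key a hac had
  -- quotient identity
  set Pb := persIm V (b : EReal) c ⊓ persKer V c (d : EReal) with hPbdef
  set Pa := persIm V (a : EReal) c ⊓ persKer V c (d : EReal) with hPadef
  have hPb : Pb = Ib ⊓ K := by
    rw [hPbdef, persIm_coe V b c hbc, persKer_coe V c d hcd.le]
  have hPa : Pa = Ia ⊓ K := by
    rw [hPadef, persIm_coe V a c hac, persKer_coe V c d hcd.le]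
  have hPaPb : Pa ≤ Pb := by
    rw [hPa, hPb]; exact inf_le_inf_right K hIaIb
  have hq : Module.rank k (↥Pb ⧸ Submodule.comap Pb.subtype Pa)
      + Module.rank k ↥(Ia ⊓ K) = Module.rank k ↥(Ib ⊓ K) := by
    have h1 := Submodule.rank_quotient_add_rank (Submodule.comap Pb.subtype Pa)
    have h2 : Module.rank k ↥(Submodule.comap Pb.subtype Pa) = Module.rank k ↥Pa :=
      (Submodule.comapSubtypeEquivOfLe hPaPb).rank_eq
    have h3 : Module.rank k ↥Pa = Module.rank k ↥(Ia ⊓ K) :=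
      (LinearEquiv.ofEq _ _ hPa).rank_eq
    have h4 : Module.rank k ↥Pb = Module.rank k ↥(Ib ⊓ K) :=
      (LinearEquiv.ofEq _ _ hPb).rank_eq
    rw [h2, h3, h4] at h1
    exact h1
  -- push to ℕ∞
  have e1 : erank (V.map b d hbd) + edim k ↥(Ib ⊓ K) = erank (V.map b c hbc) := by
    have := congrArg Cardinal.toENat keyb
    simpa [erank, edim, map_add] using this
  have e2 : erank (V.map a d had) + edim k ↥(Ia ⊓ K) = erank (V.map a c hac) := by
    have := congrArg Cardinal.toENat keya
    simpa [erank, edim, map_add] using this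
  have e3 : persMeasure V (a : EReal) b c (d : EReal) + edim k ↥(Ia ⊓ K)
      = edim k ↥(Ib ⊓ K) := by
    have := congrArg Cardinal.toENat hq
    rw [persMeasure]
    simpa [edim, map_add, -Submodule.comap_inf] using this
  -- finiteness
  have hIbK_fin : edim k ↥(Ib ⊓ K) ≠ ⊤ := fun h => hfin (by rw [← e1, h, add_top])
  have hbd_fin : erank (V.map b d hbd) ≠ ⊤ := fun h => hfin (by rw [← e1, h, top_add])
  have hac_fin : erank (V.map a c hac) ≠ ⊤ := by
    intro h
    apply hfin
    have hle : erank (V.map a c hac) ≤ erank (V.map b c hbc) :=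
      Cardinal.toENat.monotone' (Submodule.rank_mono hIaIb)
    rw [h] at hle
    exact top_le_iff.mp hle
  have had_fin : erank (V.map a d had) ≠ ⊤ := fun h => hac_fin (by rw [← e2, h, top_add])
  refine ⟨hac_fin, hbd_fin, had_fin, ?_⟩
  rw [← e1, ← e2, ← e3]
  ring
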